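/- Strict monotonicity of the circle adoption level in the number of nodes: let t, p, q > 0 and let M ≥ 1 be an integer with q ≠ j·p for every integer 1 ≤ j ≤ M. Then f_circle(t; p, q, M) < f_circle(t; p, q, M+1), equivalently S_circle(t; p, q, M) > S_circle(t; p, q, M+1). -/

import Mathlib

/-- The coefficient `c_{M−k}` of the explicit circle formula, as a function of
`k` (so `dcoef p q k = c_{M−k}`; this is independent of `M`), defined by the
backward recursion
`c_{M−k} = 1 − q^k/∏_{j=1}^{k}(q−jp) − Σ_{j=1}^{k−1} (p^{j−k}(−q)^{k−j}/(k−j)!)·c_{M−j}`. -/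
noncomputable def dcoef (p q : ℝ) : ℕ → ℝ
  | k =>
    1 - q ^ k / (∏ j ∈ Finset.Icc 1 k, (q - (j : ℝ) * p)) -
      ∑ j ∈ (Finset.Ico 1 k).attach,
        (p ^ ((j.1 : ℤ) - (k : ℤ)) * (-q) ^ (k - j.1) / (Nat.factorial (k - j.1)) *
          dcoef p q j.1)
  decreasing_by exact (Finset.mem_Ico.mp j.2).2

/-- Nonadoption probability of a node in the discrete Bass model on a one-sided
homogeneous circle with `M` nodes, external rate `p` and internal rate `q`:
`S_circle(t;p,q,M) = Σ_{k=1}^{M−1} c_k (−q)^{k−1}/(p^{k−1}(k−1)!) e^{(−kp−q)t}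
                     + (−q)^{M−1}/∏_{j=1}^{M−1}(jp−q) · e^{−Mpt}`,
where `c_k = dcoef p q (M−k)`. -/
noncomputable def Scircle (t p q : ℝ) (M : ℕ) : ℝ :=
  (∑ k ∈ Finset.Icc 1 (M - 1),
      dcoef p q (M - k) * ((-q) ^ (k - 1) / (p ^ (k - 1) * Nat.factorial (k - 1))) *
        Real.exp ((-(k : ℝ) * p - q) * t)) +
    ((-q) ^ (M - 1) / (∏ j ∈ Finset.Icc 1 (M - 1), ((j : ℝ) * p - q))) *
      Real.exp (-(M : ℝ) * p * t)

namespace CircleAux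

noncomputable def Aco (p q : ℝ) (m : ℕ) : ℝ := q ^ m / ∏ i ∈ Finset.Icc 1 m, (q - (i : ℝ) * p)
noncomputable def cc (p q : ℝ) (j : ℕ) : ℝ := (-q / p) ^ j / (Nat.factorial j : ℝ)
noncomputable def gam (p q : ℝ) (n : ℕ) : ℝ := dcoef p q n - dcoef p q (n + 1)

noncomputable def delta (t p q : ℝ) (k m : ℕ) : ℝ :=
  Aco p q m * Real.exp (-(((k : ℝ) + m) * p) * t)
  - Aco p q (m + 1) * Real.exp (-(((k : ℝ) + m + 1) * p) * t)
  + ∑ j ∈ Finset.range (m + 1),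
      gam p q (m - j) * cc p q j * Real.exp ((-(((k : ℝ) + j) * p) - q) * t)

lemma dcoef_zero (p q : ℝ) : dcoef p q 0 = 0 := by
  rw [dcoef]; rw [show Finset.Ico 1 0 = ∅ by rfl]; simp

lemma dcoef_one (p q : ℝ) : dcoef p q 1 = 1 - q / (q - p) := by
  rw [dcoef]; rw [show Finset.Ico 1 1 = ∅ by rfl]; simp

lemma dcoef_eq (p q : ℝ) (k : ℕ) : dcoef p q k =
    1 - q ^ k / (∏ j ∈ Finset.Icc 1 k, (q - (j : ℝ) * p)) -
      ∑ j ∈ Finset.Ico 1 k,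
        (p ^ ((j : ℤ) - (k : ℤ)) * (-q) ^ (k - j) / (Nat.factorial (k - j)) *
          dcoef p q j) := by
  rw [dcoef]
  rw [Finset.sum_attach (Finset.Ico 1 k)
    (fun j => (p ^ ((j : ℤ) - (k : ℤ)) * (-q) ^ (k - j) / (Nat.factorial (k - j)) * dcoef p q j))]

lemma kernel_eq_cc {p : ℝ} (q : ℝ) (hp : p ≠ 0) {j k : ℕ} (hjk : j < k) :
    p ^ ((j : ℤ) - (k : ℤ)) * (-q) ^ (k - j) / (Nat.factorial (k - j)) = cc p q (k - j) := by
  have h1 : ((j : ℤ) - (k : ℤ)) = -((k - j : ℕ) : ℤ) := by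
    have := Nat.le_of_lt hjk
    push_cast [Nat.cast_sub this]; ring
  have hf : ((Nat.factorial (k - j)) : ℝ) ≠ 0 := Nat.cast_ne_zero.mpr (Nat.factorial_ne_zero _)
  rw [h1, zpow_neg, zpow_natCast, cc, div_pow]
  field_simp

lemma sum_range_to_Ico (p q : ℝ) (k : ℕ) (hk : 0 < k) :
    ∑ j ∈ Finset.range k, cc p q (k - j) * dcoef p q j =
      ∑ j ∈ Finset.Ico 1 k, cc p q (k - j) * dcoef p q j := by
  rw [Finset.range_eq_Ico, Finset.sum_eq_sum_Ico_succ_bot hk]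
  simp [dcoef_zero]

lemma conv (p q : ℝ) (hp : p ≠ 0) (k : ℕ) :
    ∑ j ∈ Finset.range (k + 1), cc p q (k - j) * dcoef p q j =
      1 - q ^ k / (∏ i ∈ Finset.Icc 1 k, (q - (i : ℝ) * p)) := by
  rcases Nat.eq_zero_or_pos k with hk | hk
  · subst hk; simp [dcoef_zero]
  rw [Finset.sum_range_succ]
  have hc0 : cc p q (k - k) = 1 := by simp [cc]
  rw [hc0, one_mul, sum_range_to_Ico p q k hk]
  have hS : ∑ j ∈ Finset.Ico 1 k,
      (p ^ ((j : ℤ) - (k : ℤ)) * (-q) ^ (k - j) / (Nat.factorial (k - j)) * dcoef p q j) =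
      ∑ j ∈ Finset.Ico 1 k, cc p q (k - j) * dcoef p q j :=
    Finset.sum_congr rfl (fun j hj => by rw [kernel_eq_cc q hp (Finset.mem_Ico.mp hj).2])
  have h := dcoef_eq p q k
  rw [hS] at h
  linarith

lemma gam_conv (p q : ℝ) (hp : p ≠ 0) (m : ℕ) :
    ∑ j ∈ Finset.range (m + 1), cc p q (m - j) * gam p q j =
      Aco p q (m + 1) - Aco p q m := by
  have h1 := conv p q hp m
  have h2 := conv p q hp (m + 1)
  have h3 : ∑ j ∈ Finset.range (m + 1), cc p q (m - j) * dcoef p q (j + 1) =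
      ∑ j ∈ Finset.range (m + 2), cc p q (m + 1 - j) * dcoef p q j := by
    rw [Finset.sum_range_succ' (fun j => cc p q (m + 1 - j) * dcoef p q j) (m + 1)]
    simp [dcoef_zero, Nat.succ_sub_succ]
  simp only [gam, mul_sub]
  rw [Finset.sum_sub_distrib, h1, h3, h2, Aco, Aco]
  ring

lemma delta_zero (p q : ℝ) (hp : p ≠ 0) (k m : ℕ) : delta 0 p q k m = 0 := by
  have hrefl : ∑ j ∈ Finset.range (m + 1), gam p q (m - j) * cc p q j =
      ∑ j ∈ Finset.range (m + 1), cc p q (m - j) * gam p q j := by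
    rw [← Finset.sum_range_reflect (fun j => gam p q (m - j) * cc p q j) (m + 1)]
    refine Finset.sum_congr rfl (fun j hj => ?_)
    have hjm : j ≤ m := Nat.lt_succ_iff.mp (Finset.mem_range.mp hj)
    have h0 : m + 1 - 1 - j = m - j := by omega
    have h1 : m - (m - j) = j := Nat.sub_sub_self hjm
    rw [h0, h1, mul_comm]
  simp only [delta, mul_zero, Real.exp_zero, mul_one]
  rw [hrefl, gam_conv p q hp m]
  ring


lemma cc_succ (p q : ℝ) (hp : p ≠ 0) (j : ℕ) :
    (-(((j : ℝ) + 1) * p)) * cc p q (j + 1) = q * cc p q j := by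
  have hf : ((Nat.factorial j : ℝ)) ≠ 0 := Nat.cast_ne_zero.mpr (Nat.factorial_ne_zero _)
  simp only [cc, Nat.factorial_succ, pow_succ]
  push_cast
  field_simp

lemma Aco_succ (p q : ℝ) (n : ℕ) (h : q - ((n : ℝ) + 1) * p ≠ 0) :
    (q - ((n : ℝ) + 1) * p) * Aco p q (n + 1) = q * Aco p q n := by
  have hP : (∏ i ∈ Finset.Icc 1 (n + 1), (q - (i : ℝ) * p)) =
      (∏ i ∈ Finset.Icc 1 n, (q - (i : ℝ) * p)) * (q - ((n : ℝ) + 1) * p) := by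
    rw [Finset.prod_Icc_succ_top (Nat.le_add_left 1 n)]
    push_cast; ring
  rw [Aco, Aco, hP, div_mul_eq_div_div_swap, mul_div_assoc',
    show (q - ((n : ℝ) + 1) * p) * (q ^ (n + 1) / (q - ((n : ℝ) + 1) * p)) = q ^ (n + 1) by
      rw [mul_comm, div_mul_cancel₀ _ h],
    pow_succ, mul_comm (q ^ n) q, mul_div_assoc]

lemma expDeriv (c t : ℝ) : HasDerivAt (fun s : ℝ => Real.exp (c * s)) (c * Real.exp (c * t)) t := by
  have h : HasDerivAt (fun s : ℝ => c * s) c t := by simpa using (hasDerivAt_id t).const_mul c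
  simpa [mul_comm] using h.exp


lemma sum_id (t p q : ℝ) (hp : p ≠ 0) (k n : ℕ) :
    ∑ j ∈ Finset.range (n + 2), gam p q (n + 1 - j) * cc p q j *
        ((-(((k : ℝ) + j) * p) - q) * Real.exp ((-(((k : ℝ) + j) * p) - q) * t)) =
    -((k : ℝ) * p + q) * ∑ j ∈ Finset.range (n + 2), gam p q (n + 1 - j) * cc p q j *
        Real.exp ((-(((k : ℝ) + j) * p) - q) * t)
      + q * ∑ j ∈ Finset.range (n + 1), gam p q (n - j) * cc p q j *
        Real.exp ((-(((k : ℝ) + (j + 1 : ℕ)) * p) - q) * t) := by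
  have key : ∀ j ∈ Finset.range (n + 2),
      gam p q (n + 1 - j) * cc p q j *
        ((-(((k : ℝ) + j) * p) - q) * Real.exp ((-(((k : ℝ) + j) * p) - q) * t)) =
      -((k : ℝ) * p + q) * (gam p q (n + 1 - j) * cc p q j *
        Real.exp ((-(((k : ℝ) + j) * p) - q) * t))
      + gam p q (n + 1 - j) * ((-(j : ℝ) * p) * cc p q j) *
        Real.exp ((-(((k : ℝ) + j) * p) - q) * t) := fun j _ => by ring
  rw [Finset.sum_congr rfl key, Finset.sum_add_distrib, ← Finset.mul_sum]
  congr 1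
  rw [Finset.sum_range_succ' (fun j => gam p q (n + 1 - j) * ((-(j : ℝ) * p) * cc p q j) *
    Real.exp ((-(((k : ℝ) + j) * p) - q) * t)) (n + 1)]
  have h0 : gam p q (n + 1 - 0) * ((-(0 : ℕ) * p) * cc p q 0) *
      Real.exp ((-(((k : ℝ) + (0 : ℕ)) * p) - q) * t) = 0 := by
    push_cast; ring
  rw [h0, add_zero, Finset.mul_sum]
  refine Finset.sum_congr rfl (fun j hj => ?_)
  have h1 : n + 1 - (j + 1) = n - j := Nat.succ_sub_succ n j
  have h2 : (-(((j + 1 : ℕ) : ℝ)) * p) * cc p q (j + 1) = q * cc p q j := by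
    have := cc_succ p q hp j
    push_cast
    push_cast at this
    linarith [this]
  rw [h1]
  push_cast
  push_cast at h2
  rw [h2]
  ring


lemma delta_succ_k (t p q : ℝ) (k n : ℕ) : delta t p q (k + 1) n =
    Aco p q n * Real.exp (-(((k : ℝ) + ((n + 1 : ℕ) : ℝ)) * p) * t)
    - Aco p q (n + 1) * Real.exp (-(((k : ℝ) + ((n + 1 : ℕ) : ℝ) + 1) * p) * t)
    + ∑ j ∈ Finset.range (n + 1), gam p q (n - j) * cc p q j *
        Real.exp ((-(((k : ℝ) + ((j + 1 : ℕ) : ℝ)) * p) - q) * t) := by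
  simp only [delta]
  push_cast
  congr 1
  · congr 2
    · congr 1; ring
    · congr 1; ring
  · exact Finset.sum_congr rfl fun j _ => by congr 2; ring

lemma delta_hasDerivAt (t p q : ℝ) (hp : p ≠ 0) (k n : ℕ)
    (hA1 : q - ((n : ℝ) + 1) * p ≠ 0) (hA2 : q - (((n + 1 : ℕ) : ℝ) + 1) * p ≠ 0) :
    HasDerivAt (fun s => delta s p q k (n + 1))
      (-((k : ℝ) * p + q) * delta t p q k (n + 1) + q * delta t p q (k + 1) n) t := by
  have hA := (expDeriv (-(((k : ℝ) + ((n + 1 : ℕ) : ℝ)) * p)) t).const_mul (Aco p q (n + 1))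
  have hB := (expDeriv (-(((k : ℝ) + ((n + 1 : ℕ) : ℝ) + 1) * p)) t).const_mul (Aco p q (n + 1 + 1))
  have hS : HasDerivAt (fun s => ∑ j ∈ Finset.range (n + 1 + 1),
      gam p q (n + 1 - j) * cc p q j * Real.exp ((-(((k : ℝ) + (j : ℝ)) * p) - q) * s))
      (∑ j ∈ Finset.range (n + 1 + 1), gam p q (n + 1 - j) * cc p q j *
        ((-(((k : ℝ) + (j : ℝ)) * p) - q) * Real.exp ((-(((k : ℝ) + (j : ℝ)) * p) - q) * t))) t :=
    HasDerivAt.fun_sum fun j _ => (expDeriv (-(((k : ℝ) + (j : ℝ)) * p) - q) t).const_mul _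
  have htot := (hA.sub hB).add hS
  have hval : -((k : ℝ) * p + q) * delta t p q k (n + 1) + q * delta t p q (k + 1) n =
      Aco p q (n + 1) * (-(((k : ℝ) + ((n + 1 : ℕ) : ℝ)) * p) *
          Real.exp (-(((k : ℝ) + ((n + 1 : ℕ) : ℝ)) * p) * t))
      - Aco p q (n + 1 + 1) * (-(((k : ℝ) + ((n + 1 : ℕ) : ℝ) + 1) * p) *
          Real.exp (-(((k : ℝ) + ((n + 1 : ℕ) : ℝ) + 1) * p) * t))
      + ∑ j ∈ Finset.range (n + 1 + 1), gam p q (n + 1 - j) * cc p q j *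
        ((-(((k : ℝ) + (j : ℝ)) * p) - q) * Real.exp ((-(((k : ℝ) + (j : ℝ)) * p) - q) * t)) := by
    have hsum := sum_id t p q hp k n
    have hA1' := Aco_succ p q n hA1
    have hA2' := Aco_succ p q (n + 1) (by push_cast at hA2 ⊢; exact hA2)
    rw [delta_succ_k t p q k n]
    simp only [delta]
    rw [show n + 2 = n + 1 + 1 from rfl] at hsum
    rw [hsum]
    push_cast
    push_cast at hA1' hA2'
    linear_combination (-(Real.exp (-(((k : ℝ) + ((n : ℝ) + 1)) * p) * t))) * hA1' +
      Real.exp (-(((k : ℝ) + ((n : ℝ) + 1) + 1) * p) * t) * hA2'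
  rw [hval]
  simp only [delta]
  exact (hA.fun_sub hB).fun_add hS


lemma pos_of_deriv (f f' : ℝ → ℝ) (hd : ∀ s, HasDerivAt f (f' s) s) (h0 : f 0 = 0)
    (hpos : ∀ s, 0 < s → 0 < f' s) : ∀ t, 0 < t → 0 < f t := by
  intro t ht
  have hcont : ContinuousOn f (Set.Ici 0) := fun s _ => ((hd s).continuousAt).continuousWithinAt
  have hmono : StrictMonoOn f (Set.Ici 0) := by
    apply strictMonoOn_of_deriv_pos (convex_Ici 0) hcont
    intro s hs
    rw [interior_Ici] at hs
    rw [(hd s).deriv]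
    exact hpos s hs
  have := hmono Set.self_mem_Ici (Set.mem_Ici.mpr ht.le) ht
  rwa [h0] at this

lemma neg_of_deriv (f f' : ℝ → ℝ) (hd : ∀ s, HasDerivAt f (f' s) s) (h0 : f 0 = 0)
    (hneg : ∀ s, 0 < s → f' s < 0) : ∀ t, 0 < t → f t < 0 := by
  intro t ht
  have hcont : ContinuousOn f (Set.Ici 0) := fun s _ => ((hd s).continuousAt).continuousWithinAt
  have hmono : StrictAntiOn f (Set.Ici 0) := by
    apply strictAntiOn_of_deriv_neg (convex_Ici 0) hcont
    intro s hs
    rw [interior_Ici] at hs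
    rw [(hd s).deriv]
    exact hneg s hs
  have := hmono Set.self_mem_Ici (Set.mem_Ici.mpr ht.le) ht
  rwa [h0] at this

lemma hfun_deriv (p q : ℝ) : ∀ s, HasDerivAt
    (fun s => (q - p) - q * Real.exp (-p * s) + p * Real.exp (-q * s))
    (p * q * (Real.exp (-p * s) - Real.exp (-q * s))) s := by
  intro s
  have h1 := ((hasDerivAt_const s (q - p)).fun_sub ((expDeriv (-p) s).const_mul q)).fun_add
    ((expDeriv (-q) s).const_mul p)
  exact h1.congr_deriv (by ring)

lemma hfun_zero (p q : ℝ) :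
    (q - p) - q * Real.exp (-p * 0) + p * Real.exp (-q * 0) = 0 := by
  norm_num

lemma hfun_pos (p q : ℝ) (hp : 0 < p) (hq : 0 < q) (hne : q ≠ p) (t : ℝ) (ht : 0 < t) :
    0 < ((q - p) - q * Real.exp (-p * t) + p * Real.exp (-q * t)) / (q - p) := by
  rcases lt_or_gt_of_ne hne with hlt | hgt
  · -- q < p : numerator negative, denominator negative
    have hnum := neg_of_deriv _ _ (hfun_deriv p q) (hfun_zero p q)
      (fun s hs => by
        have : Real.exp (-p * s) < Real.exp (-q * s) :=
          Real.exp_lt_exp.mpr (by nlinarith)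
        exact mul_neg_of_pos_of_neg (mul_pos hp hq) (by linarith)) t ht
    exact div_pos_of_neg_of_neg hnum (by linarith)
  · -- p < q
    have hnum := pos_of_deriv _ _ (hfun_deriv p q) (hfun_zero p q)
      (fun s hs => by
        have : Real.exp (-q * s) < Real.exp (-p * s) :=
          Real.exp_lt_exp.mpr (by nlinarith)
        exact mul_pos (mul_pos hp hq) (by linarith)) t ht
    exact div_pos hnum (by linarith)

lemma Aco_zero (p q : ℝ) : Aco p q 0 = 1 := by
  simp [Aco]

lemma Aco_one (p q : ℝ) : Aco p q 1 = q / (q - p) := by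
  simp [Aco]

lemma gam_zero (p q : ℝ) : gam p q 0 = q / (q - p) - 1 := by
  rw [gam, dcoef_zero, dcoef_one]; ring

lemma delta_base_pos (t p q : ℝ) (ht : 0 < t) (hp : 0 < p) (hq : 0 < q) (hne : q ≠ p)
    (k : ℕ) : 0 < delta t p q k 0 := by
  have hq1 : q - p ≠ 0 := sub_ne_zero.mpr hne
  have hform : delta t p q k 0 = Real.exp (-((k : ℝ) * p) * t) *
      (((q - p) - q * Real.exp (-p * t) + p * Real.exp (-q * t)) / (q - p)) := by
    simp only [delta, zero_add, Finset.sum_range_one, Nat.cast_zero, add_zero, Nat.sub_zero,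
      Aco_zero, Aco_one, gam_zero]
    have e2 : Real.exp (-(((k : ℝ) + 1) * p) * t) =
        Real.exp (-((k : ℝ) * p) * t) * Real.exp (-p * t) := by
      rw [← Real.exp_add]; congr 1; ring
    have e3 : Real.exp ((-((k : ℝ) * p) - q) * t) =
        Real.exp (-((k : ℝ) * p) * t) * Real.exp (-q * t) := by
      rw [← Real.exp_add]; congr 1; ring
    rw [e2, e3]
    have hc0 : cc p q 0 = 1 := by simp [cc]
    rw [hc0]
    field_simp
    ring
  rw [hform]
  exact mul_pos (Real.exp_pos _) (hfun_pos p q hp hq hne t ht)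

lemma delta_pos (p q : ℝ) (hp : 0 < p) (hq : 0 < q) :
    ∀ m k : ℕ, (∀ i : ℕ, 1 ≤ i → i ≤ m + 1 → q ≠ (i : ℝ) * p) →
      ∀ t, 0 < t → 0 < delta t p q k m := by
  intro m
  induction m with
  | zero =>
    intro k hnd t ht
    have hne : q ≠ p := by
      have := hnd 1 le_rfl le_rfl
      simpa using this
    exact delta_base_pos t p q ht hp hq hne k
  | succ n ih =>
    intro k hnd t ht
    have hA1 : q - ((n : ℝ) + 1) * p ≠ 0 := by
      have := hnd (n + 1) (by omega) (by omega)
      push_cast at this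
      exact sub_ne_zero.mpr this
    have hA2 : q - (((n + 1 : ℕ) : ℝ) + 1) * p ≠ 0 := by
      have := hnd (n + 2) (by omega) (by omega)
      push_cast at this ⊢
      rw [show ((n : ℝ) + 1 + 1) = ((n : ℝ) + 2) by ring]
      exact sub_ne_zero.mpr this
    have hd : ∀ s, HasDerivAt (fun s => Real.exp (((k : ℝ) * p + q) * s) * delta s p q k (n + 1))
        (Real.exp (((k : ℝ) * p + q) * s) * (q * delta s p q (k + 1) n)) s := by
      intro s
      have h1 := (expDeriv ((k : ℝ) * p + q) s).fun_mul
        (delta_hasDerivAt s p q (ne_of_gt hp) k n hA1 hA2)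
      exact h1.congr_deriv (by ring)
    have h0 : Real.exp (((k : ℝ) * p + q) * 0) * delta 0 p q k (n + 1) = 0 := by
      rw [delta_zero p q (ne_of_gt hp)]; ring
    have hF := pos_of_deriv _ _ hd h0
      (fun s hs => mul_pos (Real.exp_pos _)
        (mul_pos hq (ih (k + 1) (fun i h1 h2 => hnd i h1 (by omega)) s hs))) t ht
    nlinarith [Real.exp_pos (((k : ℝ) * p + q) * t), hF]


lemma cc_eq (p q : ℝ) (i : ℕ) : cc p q i = (-q) ^ i / (p ^ i * (Nat.factorial i : ℝ)) := by
  rw [cc, div_pow, div_div]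

lemma prod_flip (p q : ℝ) (m : ℕ) :
    ∏ j ∈ Finset.Icc 1 m, ((j : ℝ) * p - q) =
      (-1 : ℝ) ^ m * ∏ j ∈ Finset.Icc 1 m, (q - (j : ℝ) * p) := by
  calc ∏ j ∈ Finset.Icc 1 m, ((j : ℝ) * p - q)
      = ∏ j ∈ Finset.Icc 1 m, ((-1 : ℝ) * (q - (j : ℝ) * p)) :=
        Finset.prod_congr rfl (fun j _ => by ring)
    _ = (∏ _j ∈ Finset.Icc 1 m, (-1 : ℝ)) * ∏ j ∈ Finset.Icc 1 m, (q - (j : ℝ) * p) :=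
        Finset.prod_mul_distrib
    _ = (-1 : ℝ) ^ m * ∏ j ∈ Finset.Icc 1 m, (q - (j : ℝ) * p) := by
        rw [Finset.prod_const, Nat.card_Icc, Nat.add_sub_cancel]

lemma R_eq_Aco (p q : ℝ) (m : ℕ) :
    (-q) ^ m / (∏ j ∈ Finset.Icc 1 m, ((j : ℝ) * p - q)) = Aco p q m := by
  rw [prod_flip, Aco, neg_pow]
  exact mul_div_mul_left _ _ (pow_ne_zero m (by norm_num))

lemma Sdiff (t p q : ℝ) (hp : p ≠ 0) (m : ℕ) :
    Scircle t p q (m + 1) - Scircle t p q (m + 2) = delta t p q 1 m := by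
  simp only [Scircle, show m + 1 - 1 = m by omega, show m + 2 - 1 = m + 1 by omega,
    R_eq_Aco p q m, R_eq_Aco p q (m + 1)]
  rw [show Finset.Icc 1 m = Finset.Ico 1 (m + 1) from (Finset.Ico_add_one_right_eq_Icc 1 m).symm,
    show Finset.Icc 1 (m + 1) = Finset.Ico 1 (m + 2) from (Finset.Ico_add_one_right_eq_Icc 1 (m + 1)).symm,
    Finset.sum_Ico_eq_sum_range, Finset.sum_Ico_eq_sum_range,
    show m + 1 - 1 = m by omega, show m + 2 - 1 = m + 1 by omega]
  simp only [show forall k : Nat, 1 + k - 1 = k from fun k => by omega]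
  rw [Finset.sum_range_succ]
  simp only [delta]
  rw [Finset.sum_range_succ, Nat.sub_self,
    show gam p q 0 = -(dcoef p q 1) by rw [gam, dcoef_zero]; ring,
    show m + 2 - (1 + m) = 1 by omega]
  have hA : Real.exp (-((((1:ℕ):ℝ) + (m:ℝ)) * p) * t) =
      Real.exp (-(((m + 1 : ℕ):ℝ)) * p * t) := by congr 1; push_cast; ring
  have hB : Real.exp (-((((1:ℕ):ℝ) + (m:ℝ) + 1) * p) * t) =
      Real.exp (-(((m + 2 : ℕ):ℝ)) * p * t) := by congr 1; push_cast; ring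
  have hZm : Real.exp ((-((((1:ℕ):ℝ) + (m:ℝ)) * p) - q) * t) =
      Real.exp ((-(((1 + m : ℕ):ℝ)) * p - q) * t) := by congr 1; push_cast; ring
  have hsum : ∑ x ∈ Finset.range m, gam p q (m - x) * cc p q x *
        Real.exp ((-((((1:ℕ):ℝ) + (x:ℝ)) * p) - q) * t)
      = (∑ x ∈ Finset.range m, dcoef p q (m + 1 - (1 + x)) *
          ((-q) ^ x / (p ^ x * (Nat.factorial x : ℝ))) * Real.exp ((-(((1 + x : ℕ):ℝ)) * p - q) * t))
        - ∑ x ∈ Finset.range m, dcoef p q (m + 2 - (1 + x)) *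
          ((-q) ^ x / (p ^ x * (Nat.factorial x : ℝ))) * Real.exp ((-(((1 + x : ℕ):ℝ)) * p - q) * t) := by
    rw [← Finset.sum_sub_distrib]
    refine Finset.sum_congr rfl fun x hx => ?_
    have hx' := Finset.mem_range.mp hx
    rw [gam, cc_eq, show m + 1 - (1 + x) = m - x by omega,
      show m + 2 - (1 + x) = m - x + 1 by omega,
      show Real.exp ((-((((1:ℕ):ℝ) + (x:ℝ)) * p) - q) * t) =
        Real.exp ((-(((1 + x : ℕ):ℝ)) * p - q) * t) from by congr 1; push_cast; ring]
    ring
  rw [hA, hB, hZm, cc_eq, hsum]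
  ring

end CircleAux

/-- Strict monotonicity of the circle adoption level in the number of nodes:
for `t, p, q > 0` and `M ≥ 1` with `q ≠ j·p` for `1 ≤ j ≤ M`,
`S_circle(t;p,q,M) > S_circle(t;p,q,M+1)`, i.e.
`f_circle(t;p,q,M) < f_circle(t;p,q,M+1)`. -/
theorem Scircle_strict_anti_in_M (t p q : ℝ) (ht : 0 < t) (hp : 0 < p) (hq : 0 < q)
    (M : ℕ) (hM : 1 ≤ M)
    (hnd : ∀ j : ℕ, 1 ≤ j → j ≤ M → q ≠ (j : ℝ) * p) :
    Scircle t p q M > Scircle t p q (M + 1) := by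
  obtain ⟨m, rfl⟩ : ∃ m, M = m + 1 := ⟨M - 1, by omega⟩
  have h := CircleAux.Sdiff t p q (ne_of_gt hp) m
  have hpos := CircleAux.delta_pos p q hp hq m 1 (fun i h1 h2 => hnd i h1 (by omega)) t ht
  have h2 : Scircle t p q (m + 1 + 1) = Scircle t p q (m + 2) := by norm_num
  rw [gt_iff_lt, h2]
  linarith
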